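/- arXiv:1802.03443 — 8 statements merged into one kernel-verified Lean document; each statement's English description precedes it below -/
import Mathlib

section
/- The n-th Motzkin number M_n = Σ_{k=0}^{⌊n/2⌋} binom(n,2k)·C_k equals the coefficient of x^n in (1/x)·Rev(x/(1+x+x^2)), where Rev denotes compositional inversion of formal power series and C_k is the k-th Catalan number. -/
open PowerSeries Finset

/-- Motzkin numbers (padded summation range). -/
def Mz (n : ℕ) : ℕ := ∑ k ∈ range (n + 1), n.choose (2 * k) * catalan k

lemma Mz_ext (n N : ℕ) (h : n + 1 ≤ N) :
    Mz n = ∑ k ∈ range N, n.choose (2 * k) * catalan k := by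
  apply Finset.sum_subset (Finset.range_subset_range.2 h)
  intro k _ hk
  simp only [Finset.mem_range, not_lt] at hk
  have : n < 2 * k := by omega
  simp [Nat.choose_eq_zero_of_lt this]

/-- Hockey stick. -/
lemma hock (p : ℕ) : ∀ n : ℕ, ∑ i ∈ range n, i.choose p = n.choose (p + 1) := by
  intro n
  induction n with
  | zero => simp
  | succ n ih => rw [Finset.sum_range_succ, ih, Nat.choose_succ_succ']; omega

/-- Upper-index Vandermonde convolution. -/
lemma vand (p q : ℕ) : ∀ m : ℕ,
    ∑ i ∈ range (m + 1), i.choose p * (m - i).choose q = (m + 1).choose (p + q + 1) := by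
  induction q with
  | zero =>
    intro m
    simp only [Nat.choose_zero_right, mul_one]
    rw [hock p (m + 1)]
  | succ q ihq =>
    intro m
    induction m with
    | zero => simp [Nat.choose_eq_zero_of_lt]
    | succ m ihm =>
      have h1 : ∀ i ∈ range (m + 1),
          i.choose p * (m + 1 - i).choose (q + 1)
            = i.choose p * (m - i).choose q + i.choose p * (m - i).choose (q + 1) := by
        intro i hi
        rw [Finset.mem_range] at hi
        have h2 : m + 1 - i = (m - i) + 1 := by omega
        rw [h2, Nat.choose_succ_succ', mul_add]
      rw [Finset.sum_range_succ, Finset.sum_congr rfl h1, Finset.sum_add_distrib, ihm, ihq m,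
        Nat.sub_self]
      have e1 : p + (q + 1) + 1 = (p + q + 1) + 1 := by ring
      rw [e1, Nat.choose_succ_succ' (m + 1) (p + q + 1), Nat.choose_zero_succ]
      ring

lemma Mz_rec (m : ℕ) : Mz (m + 1) = Mz m + ∑ j ∈ range m, Mz j * Mz (m - 1 - j) := by
  -- Step A : Pascal
  have stepA : Mz (m + 1)
      = Mz m + ∑ k ∈ range (m + 1), m.choose (2 * k + 1) * catalan (k + 1) := by
    have : Mz (m + 1) = ∑ k ∈ range (m + 1 + 1), (m + 1).choose (2 * k) * catalan k := rfl
    rw [this, Finset.sum_range_succ']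
    have h1 : ∀ k ∈ range (m + 1),
        (m + 1).choose (2 * (k + 1)) * catalan (k + 1)
          = m.choose (2 * k + 1) * catalan (k + 1) + m.choose (2 * (k + 1)) * catalan (k + 1) := by
      intro k _
      have e : 2 * (k + 1) = (2 * k + 1) + 1 := by ring
      rw [e, Nat.choose_succ_succ', add_mul]
    rw [Finset.sum_congr rfl h1, Finset.sum_add_distrib]
    have h2 : Mz m = (∑ k ∈ range (m + 1), m.choose (2 * (k + 1)) * catalan (k + 1))
        + (m.choose (2 * 0) * catalan 0) := by
      rw [Mz_ext m (m + 2) (by omega), Finset.sum_range_succ']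
    rw [h2]; simp; ring
  rcases Nat.eq_zero_or_pos m with hm | hm
  · subst hm
    rw [stepA]; simp
  -- Step B : the odd part equals the convolution of Motzkin numbers
  have stepB : ∑ k ∈ range (m + 1), m.choose (2 * k + 1) * catalan (k + 1)
      = ∑ j ∈ range m, Mz j * Mz (m - 1 - j) := by
    -- R as a square double sum
    have hR : ∑ k ∈ range (m + 1), m.choose (2 * k + 1) * catalan (k + 1)
        = ∑ a ∈ range (m + 1), ∑ b ∈ range (m + 1),
            m.choose (2 * a + 2 * b + 1) * (catalan a * catalan b) := by
      have h1 : ∀ k ∈ range (m + 1), m.choose (2 * k + 1) * catalan (k + 1)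
          = ∑ a ∈ range (k + 1),
              m.choose (2 * a + 2 * (k - a) + 1) * (catalan a * catalan (k - a)) := by
        intro k _
        have hc : catalan (k + 1) = ∑ a ∈ range (k + 1), catalan a * catalan (k - a) := by
          rw [catalan_succ, ← Fin.sum_univ_eq_sum_range]
        rw [hc, Finset.mul_sum]
        refine Finset.sum_congr rfl fun a ha => ?_
        rw [Finset.mem_range] at ha
        have e : 2 * a + 2 * (k - a) + 1 = 2 * k + 1 := by omega
        rw [e]
      rw [Finset.sum_congr rfl h1,
        Finset.sum_range_diag_flip (m + 1)
          (fun a b => m.choose (2 * a + 2 * b + 1) * (catalan a * catalan b))]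
      refine Finset.sum_congr rfl fun a ha => ?_
      rw [Finset.mem_range] at ha
      apply Finset.sum_subset (Finset.range_subset_range.2 (by omega))
      intro b _ hb
      simp only [Finset.mem_range, not_lt] at hb
      have : m < 2 * a + 2 * b + 1 := by omega
      simp [Nat.choose_eq_zero_of_lt this]
    -- L as the same square double sum
    have hL : ∑ j ∈ range m, Mz j * Mz (m - 1 - j)
        = ∑ a ∈ range (m + 1), ∑ b ∈ range (m + 1),
            m.choose (2 * a + 2 * b + 1) * (catalan a * catalan b) := by
      have h1 : ∀ j ∈ range m, Mz j * Mz (m - 1 - j)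
          = ∑ a ∈ range (m + 1), ∑ b ∈ range (m + 1),
              (j.choose (2 * a) * (m - 1 - j).choose (2 * b)) * (catalan a * catalan b) := by
        intro j hj
        rw [Finset.mem_range] at hj
        rw [Mz_ext j (m + 1) (by omega), Mz_ext (m - 1 - j) (m + 1) (by omega),
          Finset.sum_mul_sum]
        refine Finset.sum_congr rfl fun a _ => Finset.sum_congr rfl fun b _ => by ring
      rw [Finset.sum_congr rfl h1, Finset.sum_comm]
      refine Finset.sum_congr rfl fun a _ => ?_
      rw [Finset.sum_comm]
      refine Finset.sum_congr rfl fun b _ => ?_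
      rw [← Finset.sum_mul]
      have hv : ∑ j ∈ range m, j.choose (2 * a) * (m - 1 - j).choose (2 * b)
          = m.choose (2 * a + 2 * b + 1) := by
        have := vand (2 * a) (2 * b) (m - 1)
        have e1 : m - 1 + 1 = m := by omega
        rw [e1] at this
        exact this
      rw [hv]
    rw [hR, hL]
  omega

/-- The `n`-th Motzkin number `M_n = Σ_{k=0}^{⌊n/2⌋} C(n,2k)·C_k` equals the coefficient of
`x^n` in `(1/x)·Rev(x/(1+x+x^2))`.  The reversion `r` is characterized by `r(0)=0` and
`f(r)=X`, i.e. `r = X·(1 + r + r^2)`. -/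
theorem motzkin_eq_coeff_reversion
    (r : PowerSeries ℚ) (h0 : constantCoeff r = 0) (hr : r = X * (1 + r + r ^ 2)) :
    ∀ n : ℕ, coeff (n + 1) r =
      ∑ k ∈ range (n / 2 + 1), (n.choose (2 * k) : ℚ) * catalan k := by
  have ha0 : coeff 0 r = 0 := by rw [coeff_zero_eq_constantCoeff]; exact h0
  have hstep : ∀ n : ℕ, coeff (n + 1) r
      = (if n = 0 then (1 : ℚ) else 0) + coeff n r
        + ∑ i ∈ range (n + 1), coeff i r * coeff (n - i) r := by
    intro n
    conv_lhs => rw [hr]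
    rw [coeff_succ_X_mul, map_add, map_add, sq, coeff_mul,
      Finset.Nat.sum_antidiagonal_eq_sum_range_succ_mk, coeff_one]
  have key : ∀ n : ℕ, coeff (n + 1) r = (Mz n : ℚ) := by
    intro n
    induction n using Nat.strong_induction_on with
    | _ n ih =>
      match n with
      | 0 => rw [hstep 0]; simp [ha0, Mz]
      | (m + 1) =>
        rw [hstep (m + 1)]
        have hconv : ∑ i ∈ range (m + 2), coeff i r * coeff (m + 1 - i) r
            = ∑ j ∈ range m, (Mz j : ℚ) * (Mz (m - 1 - j) : ℚ) := by
          rw [Finset.sum_range_succ', Finset.sum_range_succ]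
          simp only [ha0, mul_zero, zero_mul, add_zero]
          have : m + 1 - (m + 1) = 0 := by omega
          rw [this, ha0, mul_zero, add_zero]
          refine Finset.sum_congr rfl fun j hj => ?_
          rw [Finset.mem_range] at hj
          have e : m + 1 - (j + 1) = (m - 1 - j) + 1 := by omega
          rw [e, ih j (by omega), ih ((m - 1 - j)) (by omega)]
        rw [hconv, ih m (by omega), Mz_rec m]
        push_cast
        simp
  intro n
  rw [key n]
  rw [Mz, Nat.cast_sum]
  push_cast
  symm
  apply Finset.sum_subset (Finset.range_subset_range.2 (by omega))
  intro k _ hk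
  rw [Finset.mem_range, not_lt] at hk
  have : n < 2 * k := by omega
  rw [Nat.choose_eq_zero_of_lt this]
  simp
end

section
/- For real parameters a, b with b ≠ 0 and y with 0 ≤ y < 1, the Sumudu transform of the function t ↦ (1 - y·e^{bt(1-y)})/((1-y)·e^{at(1-y)}), namely (1/x)·∫_0^∞ ((1 - y·e^{bt(1-y)})/((1-y)·e^{at(1-y)}))·e^{-t/x} dt, equals (1 - x(a(y-1)+b))/(1 + (1-y)(2a-b)x + a(a-b)(y-1)^2 x^2), for all sufficiently small x > 0 for which the integral converges. -/
open Real MeasureTheory Set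

lemma my_integral_exp_neg_mul_Ioi_zero {k : ℝ} (hk : 0 < k) :
    ∫ t in Ioi (0:ℝ), Real.exp (-(k * t)) = 1 / k := by
  have := integral_comp_mul_left_Ioi (fun u => Real.exp (-u)) 0 hk
  simp only [mul_zero, smul_eq_mul, integral_exp_neg_Ioi_zero] at this
  rw [show (fun t => Real.exp (-(k * t))) = fun t => (fun u => Real.exp (-u)) (k * t) from rfl]
  rw [this]; field_simp

lemma my_integrableOn_exp_neg_mul {k : ℝ} (hk : 0 < k) :
    IntegrableOn (fun t : ℝ => Real.exp (-(k * t))) (Ioi 0) := by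
  simpa [neg_mul] using exp_neg_integrableOn_Ioi 0 hk

/-- For real parameters `a`, `b ≠ 0`, `0 ≤ y < 1`, the Sumudu transform of
`t ↦ (1 - y·e^{bt(1-y)})/((1-y)·e^{at(1-y)})` equals
`(1 - x(a(y-1)+b))/(1 + (1-y)(2a-b)x + a(a-b)(y-1)²x²)` for all sufficiently small `x > 0`. -/
theorem sumudu_of_inverse_eulerian_gf
    (a b y : ℝ) (hb : b ≠ 0) (hy0 : 0 ≤ y) (hy1 : y < 1) :
    ∃ ε > 0, ∀ x : ℝ, 0 < x → x < ε →
      IntegrableOn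
        (fun t : ℝ =>
          (1 - y * Real.exp (b * t * (1 - y))) / ((1 - y) * Real.exp (a * t * (1 - y)))
            * Real.exp (-t / x)) (Set.Ioi 0) ∧
      (1 / x) * ∫ t in Set.Ioi (0 : ℝ),
          (1 - y * Real.exp (b * t * (1 - y))) / ((1 - y) * Real.exp (a * t * (1 - y)))
            * Real.exp (-t / x)
        = (1 - x * (a * (y - 1) + b)) /
            (1 + (1 - y) * (2 * a - b) * x + a * (a - b) * (y - 1) ^ 2 * x ^ 2) := by
  set u : ℝ := 1 - y with hu_def
  have hu : 0 < u := by rw [hu_def]; linarith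
  set M : ℝ := (|a| + |a - b|) * u + 1 with hM_def
  clear_value u
  have hM : 0 < M := by rw [hM_def]; positivity
  clear_value M
  refine ⟨1 / M, by positivity, fun x hx hxM => ?_⟩
  have hxinv : M < 1 / x := by
    rw [lt_div_iff₀ hx]
    rw [lt_div_iff₀ hM] at hxM
    linarith [mul_comm x M]
  have hk1 : 0 < a * u + 1 / x := by
    have h1 : -|a| ≤ a := neg_abs_le a
    have h2 : (0:ℝ) ≤ |a - b| := abs_nonneg _
    have h3 : -|a| * u ≤ a * u := by nlinarith
    have h4 : (0:ℝ) ≤ |a - b| * u := by positivity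
    have h5 : (|a| + |a - b|) * u = |a| * u + |a - b| * u := by ring
    rw [hM_def] at hxinv
    linarith
  have hk2 : 0 < (a - b) * u + 1 / x := by
    have h1 : -|a - b| ≤ a - b := neg_abs_le _
    have h2 : (0:ℝ) ≤ |a| := abs_nonneg _
    have h3 : -|a - b| * u ≤ (a - b) * u := by nlinarith
    have h4 : (0:ℝ) ≤ |a| * u := by positivity
    have h5 : (|a| + |a - b|) * u = |a| * u + |a - b| * u := by ring
    rw [hM_def] at hxinv
    linarith
  set k1 : ℝ := a * u + 1 / x with hk1_def
  set k2 : ℝ := (a - b) * u + 1 / x with hk2_def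
  have hfun : ∀ t : ℝ,
      (1 - y * Real.exp (b * t * u)) / (u * Real.exp (a * t * u)) * Real.exp (-t / x)
        = (1 / u) * Real.exp (-(k1 * t)) - (y / u) * Real.exp (-(k2 * t)) := by
    intro t
    have e1 : Real.exp (-(k1 * t)) = Real.exp (-(a * t * u)) * Real.exp (-t / x) := by
      rw [← Real.exp_add]; congr 1; rw [hk1_def]; ring
    have e2 : Real.exp (-(k2 * t))
        = Real.exp (b * t * u) * Real.exp (-(a * t * u)) * Real.exp (-t / x) := by
      rw [← Real.exp_add, ← Real.exp_add]; congr 1; rw [hk2_def]; ring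
    rw [e1, e2, Real.exp_neg]
    field_simp [Real.exp_ne_zero, hu.ne']
  have hint1 : IntegrableOn (fun t : ℝ => (1 / u) * Real.exp (-(k1 * t))) (Ioi 0) :=
    (my_integrableOn_exp_neg_mul hk1).const_mul _
  have hint2 : IntegrableOn (fun t : ℝ => (y / u) * Real.exp (-(k2 * t))) (Ioi 0) :=
    (my_integrableOn_exp_neg_mul hk2).const_mul _
  have hfun' : (fun t : ℝ =>
      (1 - y * Real.exp (b * t * u)) / (u * Real.exp (a * t * u)) * Real.exp (-t / x))
      = fun t => (1 / u) * Real.exp (-(k1 * t)) - (y / u) * Real.exp (-(k2 * t)) :=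
    funext hfun
  constructor
  · rw [hfun']; exact hint1.sub hint2
  · rw [hfun', integral_sub hint1 hint2, MeasureTheory.integral_const_mul, MeasureTheory.integral_const_mul,
      my_integral_exp_neg_mul_Ioi_zero hk1, my_integral_exp_neg_mul_Ioi_zero hk2]
    have hy1' : (y - 1) ^ 2 = u ^ 2 := by rw [hu_def]; ring
    have hD : 1 + u * (2 * a - b) * x + a * (a - b) * (y - 1) ^ 2 * x ^ 2
        = (x * k1) * (x * k2) := by
      rw [hy1', hk1_def, hk2_def, hu_def]; field_simp; ring
    rw [hD]
    have hxk1 : x * k1 ≠ 0 := by positivity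
    have hxk2 : x * k2 ≠ 0 := by positivity
    field_simp
    rw [hk1_def, hk2_def, hu_def]
    field_simp
    ring
end

section
/- Specializing y = 1 in c(x(1+y-x(y-1)^2)) yields c(2x), whose coefficient of x^n equals 2^n·C_n, where C_n is the n-th Catalan number; hence the row sums of the transformed type-B Eulerian triangle are 2^n·C_n. -/
open PowerSeries

/-- Specializing `y = 1` in `c(x(1+y-x(y-1)²))` yields `c(2x)`, whose `n`-th coefficient is
`2ⁿ·Cₙ`.  Here `w = c(x(1+y-x(y-1)²))` is the unique power series with `w = 1 + u·w²` for
`u = x(1+y-x(y-1)²)`; at `y = 1` the argument is `2x`, and `[xⁿ]w = 2ⁿ·catalan n`. -/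
theorem transformed_typeB_row_sums
    (y : ℚ) (hy : y = 1)
    (w : PowerSeries ℚ)
    (hw : w = 1 + (X * (1 + C y - X * (C y - 1) ^ 2)) * w ^ 2) :
    X * (1 + C y - X * (C y - 1) ^ 2) = 2 * X ∧
    ∀ n : ℕ, coeff n w = 2 ^ n * catalan n := by
  subst hy
  have harg : X * (1 + C 1 - X * (C 1 - 1) ^ 2) = 2 * (X : PowerSeries ℚ) := by
    simp [map_one]; ring
  rw [harg] at hw
  refine ⟨harg, ?_⟩
  intro n
  induction n using Nat.strong_induction_on with
  | _ n ih =>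
    match n with
    | 0 =>
      rw [hw]
      simp
    | Nat.succ n =>
      conv_lhs => rw [hw]
      have h2 : (1 : PowerSeries ℚ) + 2 * X * w ^ 2 = 1 + X * (C 2 * (w * w)) := by
        rw [sq]; simp [map_ofNat]; ring
      rw [h2, map_add, coeff_succ_X_mul, coeff_C_mul, coeff_mul]
      have hsum : ∑ p ∈ Finset.HasAntidiagonal.antidiagonal n, coeff p.1 w * coeff p.2 w
          = 2 ^ n * catalan (n + 1) := by
        rw [catalan_succ']
        push_cast
        rw [Finset.mul_sum]
        refine Finset.sum_congr rfl fun p hp => ?_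
        rw [ih p.1 (Nat.lt_succ_of_le (Finset.HasAntidiagonal.antidiagonal.fst_le hp)),
          ih p.2 (Nat.lt_succ_of_le (Finset.HasAntidiagonal.antidiagonal.snd_le hp))]
        have := Finset.HasAntidiagonal.mem_antidiagonal.mp hp
        rw [← this]
        ring
      rw [hsum]
      simp
      ring
end

section
/- The ordinary Riordan array ((1+λx+μx^2)/(1+αx+βx^2), x/(1+αx+βx^2)) has inverse whose first column has generating function μ(x) = 2β/((β-μ)·√(x^2(α^2-4β)-2αx+1) + x(2βλ-α(β+μ)) + β+μ), as formal power series identities. -/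
open PowerSeries

/-- The first column of the inverse of the Riordan array
`((1+λx+μx²)/(1+αx+βx²), x/(1+αx+βx²))` has generating function
`m = 2β/((β-μ)·√(x²(α²-4β)-2αx+1) + x(2βλ-α(β+μ)) + β+μ)`.
Here `r = Rev f` is characterized by `r(0)=0` and `r = X(1+αr+βr²)`, the moment
generating function `m = 1/g(r)` by `m·(1+λr+μr²) = 1+αr+βr²`, and `s` is the
power-series square root of `(α²-4β)x² - 2αx + 1` with constant term `1`. -/
theorem riordan_inverse_first_column_gf
    (α β lam mu : ℝ)
    (r : PowerSeries ℝ) (h0 : constantCoeff r = 0)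
    (hr : r = X * (1 + C α * r + C β * r ^ 2))
    (m : PowerSeries ℝ)
    (hm : m * (1 + C lam * r + C mu * r ^ 2) = 1 + C α * r + C β * r ^ 2)
    (s : PowerSeries ℝ) (hs0 : constantCoeff s = 1)
    (hs : s ^ 2 = C (α ^ 2 - 4 * β) * X ^ 2 - C (2 * α) * X + 1) :
    m * (C (β - mu) * s + C (2 * β * lam - α * (β + mu)) * X + C (β + mu))
      = C (2 * β) := by
  have hxu : X * (1 + C α * r + C β * r ^ 2) = r := hr.symm
  simp only [map_sub, map_add, map_mul, map_pow, map_ofNat] at hs hm hxu ⊢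
  -- identify s explicitly
  have hsq : s ^ 2 = (1 - C α * X - 2 * C β * (X * r)) ^ 2 := by
    linear_combination hs + (-(4 * C β) * X) * hxu
  have hst : s = 1 - C α * X - 2 * C β * (X * r) := by
    have h1 : (s - (1 - C α * X - 2 * C β * (X * r))) *
        (s + (1 - C α * X - 2 * C β * (X * r))) = 0 := by
      linear_combination hsq
    have h2 : s + (1 - C α * X - 2 * C β * (X * r)) ≠ 0 := by
      intro h
      have h3 := congrArg (constantCoeff) h
      simp [hs0, h0] at h3
    rcases mul_eq_zero.mp h1 with h | h
    · exact sub_eq_zero.mp h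
    · exact absurd h h2
  have hune : (1 + C α * r + C β * r ^ 2) ≠ 0 := by
    intro h
    have h3 := congrArg (constantCoeff) h
    simp [h0] at h3
  apply mul_right_cancel₀ hune
  rw [hst]
  linear_combination (2 * C β * m * ((C lam - C α) - (C β - C mu) * r)) * hxu
    + 2 * C β * hm
end

section
/- For the Riordan array ((1+λx)/(1+αx+βx^2), x/(1+αx+βx^2)) (the case μ = 0), the moment generating function μ(x) = 1/g(Rev f)(x) satisfies μ(x) = (1/(1-x(α-2λ)))·c( x(λ - x(αλ - β - λ^2))/(1-x(α-2λ))^2 ), where c is the Catalan generating function. -/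
open PowerSeries

/-- For the Riordan array `((1+λx)/(1+αx+βx²), x/(1+αx+βx²))`, the moment generating
function `m = 1/g(Rev f)` satisfies
`m = (1/(1-x(α-2λ)))·c(x(λ - x(αλ-β-λ²))/(1-x(α-2λ))²)`.
Here `r = Rev f` satisfies `r(0)=0`, `r = X(1+αr+βr²)`; `m` satisfies
`m·(1+λr) = 1+αr+βr²`; the Catalan argument `u` is characterized by clearing denominators;
and `c(u)` is the unique `w` with `w = 1 + u·w²`. -/
theorem moment_gf_eq_shifted_catalan
    (α β lam : ℝ)
    (r : PowerSeries ℝ) (h0 : constantCoeff r = 0)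
    (hr : r = X * (1 + C α * r + C β * r ^ 2))
    (m : PowerSeries ℝ)
    (hm : m * (1 + C lam * r) = 1 + C α * r + C β * r ^ 2)
    (u : PowerSeries ℝ)
    (hu : u * (1 - C (α - 2 * lam) * X) ^ 2
        = X * (C lam - X * C (α * lam - β - lam ^ 2)))
    (w : PowerSeries ℝ) (hw : w = 1 + u * w ^ 2) :
    m * (1 - C (α - 2 * lam) * X) = w := by
  set D : PowerSeries ℝ := 1 - C (α - 2 * lam) * X with hD
  set L : PowerSeries ℝ := 1 + C lam * r with hL
  set S : PowerSeries ℝ := 1 + C α * r + C β * r ^ 2 with hS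
  -- L is nonzero
  have hLne : L ≠ 0 := by
    intro h
    have := congrArg constantCoeff h
    simp [hL, h0] at this
  -- the key identity, times L^2
  have hEL : (m * D - 1 - X * (C lam - X * C (α * lam - β - lam ^ 2)) * m ^ 2)
      * L ^ 2 = 0 := by
    rw [hD, hL]
    rw [hL, hS] at hm
    rw [hS] at hr
    simp only [map_sub, map_mul, map_pow, map_ofNat]
    linear_combination
      (((1 - (C α - 2 * C lam) * X) * (1 + C lam * r)
          + (-(C lam * X) + (C α * C lam - C β - C lam ^ 2) * X ^ 2)
            * (m * (1 + C lam * r) + (1 + C α * r + C β * r ^ 2)))) * hm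
      - ((-((C α - 2 * C lam) * (1 + C lam * r))
          - C lam * (1 + C α * r + C β * r ^ 2)
          + (C α * C lam - C β - C lam ^ 2)
            * (X * (1 + C α * r + C β * r ^ 2) + r))) * hr
  have hE : m * D - 1 - X * (C lam - X * C (α * lam - β - lam ^ 2)) * m ^ 2 = 0 := by
    rcases mul_eq_zero.mp hEL with h | h
    · exact h
    · exact absurd h (pow_ne_zero 2 hLne)
  -- v := m*D satisfies the Catalan fixed point equation
  have hv : m * D = 1 + u * (m * D) ^ 2 := by
    linear_combination hE - m ^ 2 * hu
  -- constantCoeff u = 0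
  have hu0 : constantCoeff u = 0 := by
    have := congrArg constantCoeff hu
    simpa [hD] using this
  -- factor
  have hfac : (1 - u * (m * D + w)) * (m * D - w) = 0 := by
    linear_combination hv - hw
  rcases mul_eq_zero.mp hfac with h | h
  · exfalso
    have := congrArg constantCoeff h
    simp [hu0] at this
  · exact sub_eq_zero.mp h
end

section
/- The moment sequence μ_n of the ordinary Riordan array ((1-αx)/(1+βx+γx^2), x/(1+βx+γx^2)) satisfies μ_n = [x^n] (1/x)·Rev( x(1+αx)/(1 + (β+2α)x + (α^2+αβ+γ)x^2) ), as an identity of formal power series coefficients. -/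
open PowerSeries

/-- The moments `μₙ` of the Riordan array `((1-αx)/(1+βx+γx²), x/(1+βx+γx²))` satisfy
`μₙ = [xⁿ](1/x)·Rev(x(1+αx)/(1+(β+2α)x+(α²+αβ+γ)x²))`.
Here `r = Rev f` satisfies `r(0)=0`, `r = X(1+βr+γr²)`; the moment generating function
`m = 1/g(r)` satisfies `m·(1-αr) = 1+βr+γr²`; and `ρ` is the reversion of
`x(1+αx)/(1+(β+2α)x+(α²+αβ+γ)x²)`, characterized by `ρ(0)=0` and clearing denominators. -/
theorem moments_eq_reversion_coeffs
    (α β γ : ℝ)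
    (r : PowerSeries ℝ) (h0 : constantCoeff r = 0)
    (hr : r = X * (1 + C β * r + C γ * r ^ 2))
    (m : PowerSeries ℝ)
    (hm : m * (1 - C α * r) = 1 + C β * r + C γ * r ^ 2)
    (ρ : PowerSeries ℝ) (hρ0 : constantCoeff ρ = 0)
    (hρ : ρ * (1 + C α * ρ)
        = X * (1 + C (β + 2 * α) * ρ + C (α ^ 2 + α * β + γ) * ρ ^ 2)) :
    ∀ n : ℕ, coeff n m = coeff (n + 1) ρ := by
  set a : PowerSeries ℝ := C α with ha
  set b : PowerSeries ℝ := C β with hb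
  set g : PowerSeries ℝ := C γ with hg
  have hC1 : C (β + 2 * α) = b + 2 * a := by
    rw [ha, hb]; simp [map_add, map_mul, map_ofNat]
  have hC2 : C (α ^ 2 + α * β + γ) = a ^ 2 + a * b + g := by
    rw [ha, hb, hg]; simp [map_add, map_mul, map_pow]
  rw [hC1, hC2] at hρ
  -- key relation : X * m * (1 - a r) = r
  have h1 : (X * m) * (1 - a * r) = r := by
    rw [mul_assoc, hm]; exact hr.symm
  -- X * m satisfies the same functional equation as ρ
  have hu : (1 - a * r) ≠ 0 := by
    intro h
    have := congrArg (constantCoeff) h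
    simp [h0] at this
  have hE : (X * m) * (1 + a * (X * m))
      = X * (1 + (b + 2 * a) * (X * m) + (a ^ 2 + a * b + g) * (X * m) ^ 2) := by
    have h2 := pow_ne_zero 2 hu
    apply mul_right_cancel₀ h2
    have hr' : r = X * (1 + b * r + g * r ^ 2) := hr
    set A := X * m with hA
    set u := 1 - a * r with huu
    linear_combination (u + a * (A * u + r) - (b + 2 * a) * X * u
        - (a ^ 2 + a * b + g) * X * (A * u + r)) * h1 + hr'
  -- uniqueness : ρ = X * m
  have hfac : (ρ - X * m) * (1 + a * (ρ + X * m) - X * (b + 2 * a)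
      - X * (a ^ 2 + a * b + g) * (ρ + X * m)) = 0 := by
    linear_combination hρ - hE
  have hU : (1 + a * (ρ + X * m) - X * (b + 2 * a)
      - X * (a ^ 2 + a * b + g) * (ρ + X * m)) ≠ 0 := by
    intro h
    have := congrArg (constantCoeff) h
    simp [hρ0, constantCoeff_X] at this
  have hρm : ρ = X * m := by
    rcases mul_eq_zero.mp hfac with h | h
    · exact sub_eq_zero.mp h
    · exact absurd h hU
  intro n
  rw [hρm, coeff_succ_X_mul]
end

section
/- The moment generating function of the Riordan array ((1-αx)/(1+βx+γx^2), x/(1+βx+γx^2)) equals 2/(1 - (2α+β)x + √(1-2βx+(β^2-4γ)x^2)), as a formal power series identity. -/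
open PowerSeries

/-- The moment generating function of the Riordan array
`((1-αx)/(1+βx+γx²), x/(1+βx+γx²))` equals `2/(1-(2α+β)x+√(1-2βx+(β²-4γ)x²))`.
Here `r = Rev f` satisfies `r(0)=0`, `r = X(1+βr+γr²)`; the moment generating function
`m = 1/g(r)` satisfies `m·(1-αr) = 1+βr+γr²`; and `s` is the power-series square root of
`1-2βx+(β²-4γ)x²` with constant term `1`. -/
theorem moment_gf_closed_form
    (α β γ : ℝ)
    (r : PowerSeries ℝ) (h0 : constantCoeff r = 0)
    (hr : r = X * (1 + C β * r + C γ * r ^ 2))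
    (m : PowerSeries ℝ)
    (hm : m * (1 - C α * r) = 1 + C β * r + C γ * r ^ 2)
    (s : PowerSeries ℝ) (hs0 : constantCoeff s = 1)
    (hs : s ^ 2 = 1 - C (2 * β) * X + C (β ^ 2 - 4 * γ) * X ^ 2) :
    m * (1 - C (2 * α + β) * X + s) = 2 := by
  simp only [map_mul, map_sub, map_add, map_pow, map_ofNat, map_one] at hs ⊢
  set t : PowerSeries ℝ := 1 - C β * X - 2 * C γ * X * r with ht
  have hst : s = t := by
    have hf : (s - t) * (s + t) = 0 := by
      linear_combination hs + (4 * C γ * X) * hr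
    rcases mul_eq_zero.mp hf with h | h
    · exact sub_eq_zero.mp h
    · exfalso
      have := congrArg (constantCoeff) h
      simp [ht, h0, hs0] at this
  have hne : (1 - C α * r) ≠ 0 := by
    intro h
    have := congrArg (constantCoeff) h
    simp [h0] at this
  apply mul_right_cancel₀ hne
  rw [hst]
  linear_combination (1 - (2 * C α + C β) * X + t) * hm
    + (2 * (C α + C β + C γ * r)) * hr
end

section
/- For the exponential Riordan array [ (1-y)e^{ax(1-y)}/(1 - y e^{bx(1-y)}), (e^{bx} - e^{bxy})/(b(e^{bxy} - y e^{bx})) ] with b ≠ 0 and y ≠ 1, the A-series and Z-series satisfy A(x) = f'(Rev f)(x) = (1+bx)(1+bxy) and Z(x) = g'(Rev f)(x)/g(Rev f)(x) = a(1-y) + by + b^2 y x. -/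
open PowerSeries

private lemma derE_aux (c : ℝ) :
    PowerSeries.derivative ℝ (rescale c (exp ℝ)) = C c * rescale c (exp ℝ) := by
  ext n
  rw [coeff_derivative, coeff_C_mul, coeff_rescale, coeff_rescale, coeff_exp, coeff_exp]
  have h2 : ((n:ℝ)+1) ≠ 0 := by positivity
  have h3 : ((n.factorial : ℝ)) ≠ 0 := by exact_mod_cast n.factorial_ne_zero
  simp only [map_div₀, map_one, map_natCast, eq_ratCast, Rat.cast_natCast]
  field_simp
  rw [Nat.factorial_succ]; push_cast; ring

private lemma constC_aux (c : ℝ) : constantCoeff (rescale c (exp ℝ)) = 1 := by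
  rw [← coeff_zero_eq_constantCoeff_apply, coeff_rescale, coeff_exp]
  simp

/-- For the exponential Riordan array with
`g(x) = (1-y)e^{ax(1-y)}/(1-y·e^{bx(1-y)})` and
`f(x) = (e^{bx}-e^{bxy})/(b(e^{bxy}-y·e^{bx}))` (with `b ≠ 0`, `y ≠ 1`), the A-series and
Z-series are `A(x) = f'(Rev f)(x) = (1+bx)(1+bxy)` and
`Z(x) = g'(Rev f)(x)/g(Rev f)(x) = a(1-y)+by+b²yx`.  Since `Mathlib` lacks power-series
substitution, we state the equivalent composed identities `A(f(x)) = f'(x)` and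
`Z(f(x))·g(x) = g'(x)`, where `A` and `Z` are polynomials in `f`. -/
theorem eulerian_exponential_riordan_A_and_Z
    (a b y : ℝ) (hb : b ≠ 0) (hy : y ≠ 1)
    (g f : PowerSeries ℝ)
    (hg : g = C (1 - y) * rescale (a * (1 - y)) (exp ℝ) *
          (1 - C y * rescale (b * (1 - y)) (exp ℝ))⁻¹)
    (hf : f = (rescale b (exp ℝ) - rescale (b * y) (exp ℝ)) *
          (C b * (rescale (b * y) (exp ℝ) - C y * rescale b (exp ℝ)))⁻¹) :
    (1 + C b * f) * (1 + C (b * y) * f) = PowerSeries.derivative ℝ f ∧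
    (C (a * (1 - y) + b * y) + C (b ^ 2 * y) * f) * g = PowerSeries.derivative ℝ g := by
  have hy' : (1:ℝ) - y ≠ 0 := sub_ne_zero.mpr (Ne.symm hy)
  have hcD : constantCoeff (C b * (rescale (b * y) (exp ℝ) - C y * rescale b (exp ℝ)))
      = b * (1 - y) := by
    simp [constC_aux]
  have hDne0 : constantCoeff (C b * (rescale (b * y) (exp ℝ) - C y * rescale b (exp ℝ))) ≠ 0 := by
    rw [hcD]; exact mul_ne_zero hb hy'
  have hDne : (C b * (rescale (b * y) (exp ℝ) - C y * rescale b (exp ℝ))) ≠ 0 := by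
    intro h; rw [h, map_zero] at hDne0; exact hDne0 rfl
  have hinv : (C b * (rescale (b * y) (exp ℝ) - C y * rescale b (exp ℝ)))⁻¹ *
      (C b * (rescale (b * y) (exp ℝ) - C y * rescale b (exp ℝ))) = 1 := by
    rw [mul_comm]; exact PowerSeries.mul_inv_cancel _ hDne0
  have hfD : f * (C b * (rescale (b * y) (exp ℝ) - C y * rescale b (exp ℝ)))
      = rescale b (exp ℝ) - rescale (b * y) (exp ℝ) := by
    rw [hf, mul_assoc, hinv, mul_one]
  have hder := congrArg (⇑(PowerSeries.derivative ℝ)) hfD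
  simp only [Derivation.leibniz, smul_eq_mul, map_sub, derivative_C, derE_aux,
    mul_zero, zero_mul, add_zero, zero_add] at hder
  -- part 2 setup
  have hcM : constantCoeff (1 - C y * rescale (b * (1 - y)) (exp ℝ)) = 1 - y := by
    simp [constC_aux]
  have hMne0 : constantCoeff (1 - C y * rescale (b * (1 - y)) (exp ℝ)) ≠ 0 := by
    rw [hcM]; exact hy'
  have hMne : (1 - C y * rescale (b * (1 - y)) (exp ℝ)) ≠ 0 := by
    intro h; rw [h, map_zero] at hMne0; exact hMne0 rfl
  have hinvM : (1 - C y * rescale (b * (1 - y)) (exp ℝ))⁻¹ *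
      (1 - C y * rescale (b * (1 - y)) (exp ℝ)) = 1 := by
    rw [mul_comm]; exact PowerSeries.mul_inv_cancel _ hMne0
  have hgM : g * (1 - C y * rescale (b * (1 - y)) (exp ℝ))
      = C (1 - y) * rescale (a * (1 - y)) (exp ℝ) := by
    rw [hg, mul_assoc, hinvM, mul_one]
  have hder2 := congrArg (⇑(PowerSeries.derivative ℝ)) hgM
  simp only [Derivation.leibniz, smul_eq_mul, map_sub, derivative_C, derE_aux,
    Derivation.map_one_eq_zero, mul_zero, zero_mul, add_zero, zero_add, zero_sub] at hder2
  have hHv : rescale (b * (1 - y)) (exp ℝ) * rescale (b * y) (exp ℝ) = rescale b (exp ℝ) := by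
    have h := exp_mul_exp_eq_exp_add (A := ℝ) (b * (1 - y)) (b * y)
    rwa [show b * (1 - y) + b * y = b by ring] at h
  constructor
  · apply mul_right_cancel₀ (mul_ne_zero hDne hDne)
    simp only [map_mul] at hder ⊢
    linear_combination
      ((C b + C b * C y) * (C b * (rescale (b*y) (exp ℝ) - C y * rescale b (exp ℝ)))
        + C b^2 * C y * (f * (C b * (rescale (b*y) (exp ℝ) - C y * rescale b (exp ℝ)))
            + (rescale b (exp ℝ) - rescale (b*y) (exp ℝ)))
        + C b * (C b * C y * rescale (b*y) (exp ℝ) - C y * (C b * rescale b (exp ℝ)))) * hfD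
      - (C b * (rescale (b*y) (exp ℝ) - C y * rescale b (exp ℝ))) * hder
  · apply mul_right_cancel₀ (mul_ne_zero hMne (mul_ne_zero hMne hDne))
    simp only [map_mul, map_add, map_sub, map_one, map_pow] at hder2 hgM ⊢
    linear_combination
      (C b^2 * C y * g * (1 - C y * rescale (b*(1-y)) (exp ℝ))
          * (1 - C y * rescale (b*(1-y)) (exp ℝ))) * hfD
      - (g * (1 - C y * rescale (b*(1-y)) (exp ℝ)) * (C b^2 * C y * (1 - C y))) * hHv
      + (C a * (1 - C y) * (1 - C y * rescale (b*(1-y)) (exp ℝ))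
          * (C b * (rescale (b*y) (exp ℝ) - C y * rescale b (exp ℝ)))) * hgM
      - ((1 - C y * rescale (b*(1-y)) (exp ℝ))
          * (C b * (rescale (b*y) (exp ℝ) - C y * rescale b (exp ℝ)))) * hder2
end
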